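/- Under a weak IASI, the set of vertices whose set-labels have cardinality at least 2 forms an independent set in the graph. -/

import Mathlib

open scoped Pointwise

/-- An integer additive set-indexer (IASI) of a simple graph `G`: an injective labeling of the
vertices by finite nonempty subsets of `ℕ` such that the induced sumset map on edges is
injective. -/
def IsIASI {V : Type*} (G : SimpleGraph V) (f : V → Finset ℕ) : Prop :=
  Function.Injective f ∧ (∀ v, (f v).Nonempty) ∧
    ∀ u v x y, G.Adj u v → G.Adj x y → f u + f v = f x + f y → s(u, v) = s(x, y)

/-- A weak IASI: an IASI in which every edge `uv` satisfies
`|f u + f v| = max |f u| |f v|`. -/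
def IsWeakIASI {V : Type*} (G : SimpleGraph V) (f : V → Finset ℕ) : Prop :=
  IsIASI G f ∧ ∀ u v, G.Adj u v → (f u + f v).card = max (f u).card (f v).card

/-- Under a weak IASI, the set of vertices whose set-labels have cardinality at least `2`
forms an independent set in the graph. -/
theorem weakIASI_nonsingleton_indep {V : Type*} (G : SimpleGraph V)
    (f : V → Finset ℕ) (hf : IsWeakIASI G f) :
    ∀ u ∈ {v | 2 ≤ (f v).card}, ∀ w ∈ {v | 2 ≤ (f v).card}, ¬ G.Adj u w := by
  intro u hu w hw hadj
  obtain ⟨⟨_, hne, _⟩, hweak⟩ := hf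
  have h1 := cauchy_davenport_add_of_linearOrder_isCancelAdd (hne u) (hne w)
  have h2 := hweak u w hadj
  simp only [Set.mem_setOf_eq] at hu hw
  omega
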